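/- Let p be a prime, let K be an algebraically closed field of characteristic p, let q = p^k with k ≥ 1, and let n ≥ 1 be an integer. Then the set of multisets s of elements of K such that s has cardinality n, 0 is not an element of s, and the image of s under the map z ↦ z^q equals s, is finite of cardinality q^{n−1}(q − 1). -/

import Mathlib

open Polynomial

namespace CardQPowerStable

/-- The fixed subfield of the `k`-th iterate of Frobenius. -/
def fixedSubfield (K : Type*) [Field K] (p : ℕ) [ExpChar K p] (k : ℕ) : Subfield K where
  carrier := {x | iterateFrobenius K p k x = x}
  mul_mem' := fun {a b} ha hb => by
    simp only [Set.mem_setOf_eq, map_mul] at *; rw [ha, hb]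
  one_mem' := by simp
  add_mem' := fun {a b} ha hb => by
    simp only [Set.mem_setOf_eq, map_add] at *; rw [ha, hb]
  zero_mem' := by simp
  neg_mem' := fun {a} ha => by
    simp only [Set.mem_setOf_eq, map_neg] at *; rw [ha]
  inv_mem' := fun a ha => by
    simp only [Set.mem_setOf_eq, map_inv₀] at *; rw [ha]

theorem mem_fixedSubfield {K : Type*} [Field K] {p : ℕ} [ExpChar K p] {k : ℕ} {x : K} :
    x ∈ fixedSubfield K p k ↔ x ^ p ^ k = x := Iff.rfl

theorem card_fixedSubfield (K : Type*) [Field K] [IsAlgClosed K] (p : ℕ) (hp : p.Prime)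
    [CharP K p] [ExpChar K p] (k : ℕ) (hk : 1 ≤ k) :
    Finite (fixedSubfield K p k) ∧ Nat.card (fixedSubfield K p k) = p ^ k := by
  classical
  set q := p ^ k with hq
  set g : K[X] := X ^ q - X with hg
  have hq1 : 1 < q := Nat.one_lt_pow (by omega) hp.one_lt
  have hgdeg : g.natDegree = q := by
    rw [hg, natDegree_sub_eq_left_of_natDegree_lt, natDegree_X_pow]
    rw [natDegree_X, natDegree_X_pow]; exact hq1
  have hgne : g ≠ 0 := fun h => by
    rw [h, natDegree_zero] at hgdeg; omega
  have hsep : g.Separable := galois_poly_separable p q (dvd_pow_self p (by omega))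
  have hset : (fixedSubfield K p k : Set K) = ↑g.roots.toFinset := by
    ext x
    rw [Finset.mem_coe, Multiset.mem_toFinset, mem_roots hgne]
    simp only [SetLike.mem_coe, Finset.coe_sort_coe, Multiset.mem_toFinset, Finset.mem_coe,
      mem_roots hgne, mem_fixedSubfield, IsRoot, hg, eval_sub, eval_pow, eval_X, sub_eq_zero]
    exact Iff.rfl
  have hfinset : (fixedSubfield K p k : Set K).Finite := by
    rw [hset]; exact Finset.finite_toSet _
  have hfin : Finite (fixedSubfield K p k) := hfinset.to_subtype
  refine ⟨hfin, ?_⟩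
  have hroots : Multiset.card g.roots = q := by
    rw [splits_iff_card_roots.mp (IsAlgClosed.splits g), hgdeg]
  calc Nat.card (fixedSubfield K p k)
      = (fixedSubfield K p k : Set K).ncard := (Nat.card_coe_set_eq _)
    _ = g.roots.toFinset.card := by rw [hset, Set.ncard_coe_finset]
    _ = Multiset.card g.roots := Multiset.toFinset_card_of_nodup (nodup_roots hsep)
    _ = q := hroots

end CardQPowerStable

/-- Over an algebraically closed field of characteristic `p`, with `q = p^k`, the number of
multisets of cardinality `n` of nonzero elements stable under the `q`-power map is
`q^{n-1}(q-1)`. -/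
theorem card_qPowerStable_multisets_charP
    {K : Type*} [Field K] [IsAlgClosed K]
    (p : ℕ) (hp : p.Prime) [CharP K p] (k : ℕ) (hk : 1 ≤ k) (n : ℕ) (hn : 1 ≤ n) :
    {s : Multiset K | Multiset.card s = n ∧ (0 : K) ∉ s ∧
        Multiset.map (fun z : K => z ^ (p ^ k)) s = s}.Finite ∧
      Nat.card {s : Multiset K | Multiset.card s = n ∧ (0 : K) ∉ s ∧
        Multiset.map (fun z : K => z ^ (p ^ k)) s = s}
        = (p ^ k) ^ (n - 1) * (p ^ k - 1) := by
  classical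
  haveI := Fact.mk hp
  haveI : ExpChar K p := ExpChar.prime hp
  obtain ⟨m, rfl⟩ : ∃ m, n = m + 1 := ⟨n - 1, (Nat.succ_pred_eq_of_pos hn).symm⟩
  set q := p ^ k with hq
  set F := CardQPowerStable.fixedSubfield K p k with hF
  obtain ⟨hFfin, hFcard⟩ := CardQPowerStable.card_fixedSubfield K p hp k hk
  haveI := hFfin
  haveI : Fintype F := Fintype.ofFinite _
  set φ := iterateFrobenius K p k with hφdef
  have hφ : ∀ x : K, φ x = x ^ q := fun x => rfl
  set S := {s : Multiset K | Multiset.card s = m + 1 ∧ (0 : K) ∉ s ∧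
      Multiset.map (fun z : K => z ^ q) s = s} with hS
  set P : Multiset K → K[X] := fun s => (s.map fun a => X - C a).prod with hP
  have hPmonic : ∀ s : Multiset K, (P s).Monic := fun s =>
    monic_multiset_prod_of_monic _ _ fun a _ => monic_X_sub_C a
  have hProots : ∀ s : Multiset K, (P s).roots = s := fun s =>
    roots_multiset_prod_X_sub_C s
  have hPdeg : ∀ s : Multiset K, (P s).natDegree = Multiset.card s := fun s =>
    natDegree_multiset_prod_X_sub_C_eq_card s
  have hPmap : ∀ s ∈ S, (P s).map φ = P s := by
    intro s hs
    have h1 : (P s).map φ = P (s.map fun z : K => z ^ q) := by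
      simp only [hP, Polynomial.map_multiset_prod, Multiset.map_map, Function.comp,
        Polynomial.map_sub, map_X, map_C]
      rfl
    rw [h1, hs.2.2]
  have hcoeffF : ∀ s ∈ S, ∀ i : ℕ, (P s).coeff i ∈ F := by
    intro s hs i
    have h2 := congrArg (fun Q : K[X] => Q.coeff i) (hPmap s hs)
    exact (by simpa only [coeff_map] using h2 : φ ((P s).coeff i) = (P s).coeff i)
  have hcoeff0 : ∀ s ∈ S, (P s).coeff 0 ≠ 0 := by
    intro s hs h
    have h0 : (0 : K) ∈ (P s).roots := by
      rw [mem_roots (hPmonic s).ne_zero]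
      rwa [IsRoot, ← coeff_zero_eq_eval_zero]
    rw [hProots] at h0; exact hs.2.1 h0
  let T := {f : Fin (m + 1) → F // f 0 ≠ 0}
  let Φ : S → T := fun s => ⟨fun i => ⟨(P ↑s).coeff i, hcoeffF _ s.2 i⟩, by
    intro h
    exact hcoeff0 _ s.2 (by simpa using congrArg Subtype.val h)⟩
  have hΦinj : Function.Injective Φ := by
    rintro ⟨s, hs⟩ ⟨t, ht⟩ h
    have hc : ∀ i : Fin (m + 1), (P s).coeff i = (P t).coeff i := fun i =>
      congrArg Subtype.val (congrFun (congrArg Subtype.val h) i)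
    have hds : (P s).natDegree = m + 1 := by rw [hPdeg, hs.1]
    have hdt : (P t).natDegree = m + 1 := by rw [hPdeg, ht.1]
    have hPst : P s = P t := by
      ext j
      rcases lt_trichotomy j (m + 1) with hj | hj | hj
      · exact hc ⟨j, hj⟩
      · have h1 : (P s).coeff j = 1 := by rw [hj, ← hds]; exact (hPmonic s).coeff_natDegree
        have h2 : (P t).coeff j = 1 := by rw [hj, ← hdt]; exact (hPmonic t).coeff_natDegree
        rw [h1, h2]
      · rw [coeff_eq_zero_of_natDegree_lt (by omega),
          coeff_eq_zero_of_natDegree_lt (by omega)]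
    refine Subtype.ext ?_
    show s = t
    rw [← hProots s, ← hProots t, hPst]
  have hΦsurj : Function.Surjective Φ := by
    rintro ⟨f, hf⟩
    set Q : K[X] := X ^ (m + 1) + ∑ i : Fin (m + 1), C (f i : K) * X ^ (i : ℕ) with hQ
    have hdegsum : (∑ i : Fin (m + 1), C (f i : K) * X ^ (i : ℕ)).degree < ((m + 1 : ℕ) : WithBot ℕ) := by
      refine lt_of_le_of_lt (degree_sum_le _ _) ?_
      rw [Finset.sup_lt_iff (by exact WithBot.bot_lt_coe _)]
      intro i _
      refine lt_of_le_of_lt (degree_C_mul_X_pow_le _ _) ?_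
      exact_mod_cast i.isLt
    have hQmonic : Q.Monic := monic_X_pow_add (by exact_mod_cast hdegsum)
    have hQdeg : Q.natDegree = m + 1 := by
      have hd : Q.degree = ((m + 1 : ℕ) : WithBot ℕ) := by
        rw [hQ, add_comm, degree_add_eq_right_of_degree_lt, degree_X_pow]
        rw [degree_X_pow]; exact hdegsum
      exact natDegree_eq_of_degree_eq_some hd
    have hQcoeff : ∀ i : Fin (m + 1), Q.coeff i = (f i : K) := by
      intro j
      rw [hQ, coeff_add, coeff_X_pow, if_neg (by omega : (j : ℕ) ≠ m + 1), finset_sum_coeff,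
        zero_add]
      rw [Finset.sum_eq_single j]
      · rw [coeff_C_mul_X_pow, if_pos rfl]
      · intro b _ hb
        rw [coeff_C_mul_X_pow, if_neg (fun h => hb (Fin.ext h.symm))]
      · intro h; exact absurd (Finset.mem_univ j) h
    have hQmap : Q.map φ = Q := by
      rw [hQ]
      simp only [Polynomial.map_add, Polynomial.map_pow, map_X, Polynomial.map_sum,
        Polynomial.map_mul, map_C]
      congr 1
      refine Finset.sum_congr rfl fun i _ => ?_
      rw [show φ ((f i : K)) = (f i : K) from (f i).2]
    have hQroots : Multiset.card Q.roots = m + 1 := by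
      rw [splits_iff_card_roots.mp (IsAlgClosed.splits Q), hQdeg]
    have h0 : (0 : K) ∉ Q.roots := by
      intro h
      have hr := (mem_roots hQmonic.ne_zero).1 h
      have h00 : Q.coeff 0 = 0 := by rw [coeff_zero_eq_eval_zero]; exact hr
      have hc0 := hQcoeff 0
      rw [Fin.val_zero, h00] at hc0
      exact hf (Subtype.ext hc0.symm)
    have hstab : Multiset.map (fun z : K => z ^ q) Q.roots = Q.roots := by
      have hrm := Splits.roots_map (f := Q) (splits_iff_card_roots.mpr (by rw [hQroots, hQdeg])) φ
      rw [hQmap] at hrm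
      exact hrm.symm
    refine ⟨⟨Q.roots, ⟨hQroots, h0, hstab⟩⟩, ?_⟩
    have hPQ : P Q.roots = Q :=
      prod_multiset_X_sub_C_of_monic_of_roots_card_eq hQmonic (by rw [hQroots, hQdeg])
    apply Subtype.ext
    funext i
    apply Subtype.ext
    show (P Q.roots).coeff i = (f i : K)
    rw [hPQ]; exact hQcoeff i
  haveI : Finite S := Finite.of_injective Φ hΦinj
  refine ⟨Set.finite_coe_iff.mp inferInstance, ?_⟩
  have h1 : Nat.card S = Nat.card T := Nat.card_eq_of_bijective Φ ⟨hΦinj, hΦsurj⟩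
  have e : T ≃ {x : F // x ≠ 0} × (Fin m → F) :=
    { toFun := fun f => (⟨f.1 0, f.2⟩, fun i => f.1 i.succ)
      invFun := fun x => ⟨Fin.cons x.1.1 x.2, by simp [x.1.2]⟩
      left_inv := fun f => Subtype.ext (funext fun i => by
        refine Fin.cases ?_ (fun j => ?_) i <;> simp
        )
      right_inv := fun x => by
        refine Prod.ext (Subtype.ext ?_) (funext fun j => ?_) <;> simp }
  have hne : Nat.card {x : F // x ≠ 0} = q - 1 := by
    rw [Nat.card_eq_fintype_card, Fintype.card_subtype_compl, Fintype.card_subtype_eq,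
      ← Nat.card_eq_fintype_card, hFcard]
  rw [h1, Nat.card_congr e, Nat.card_prod, Nat.card_fun, hne, hFcard,
    Nat.card_eq_fintype_card, Fintype.card_fin, Nat.add_sub_cancel, mul_comm]
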